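/- Let W be a basic localizer on Cat and let f, g: I → J be functors between small categories. If there exists a natural transformation μ: f ⟹ g, then f ∈ W if and only if g ∈ W. Consequently, W is invariant under the homotopy relation generated by the existence of natural transformations. -/

import Mathlib

open CategoryTheory CategoryTheory.Limits

universe u

/-- A class of morphisms is weakly saturated if it contains identities,
satisfies 2-out-of-3, and satisfies (WS3). -/
structure IsWeaklySaturated {C : Type*} [Category C] (W : MorphismProperty C) : Prop where
  id_mem : ∀ X : C, W (𝟙 X)
  comp_mem : ∀ ⦃X Y Z : C⦄ (f : X ⟶ Y) (g : Y ⟶ Z), W f → W g → W (f ≫ g)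
  of_comp_left : ∀ ⦃X Y Z : C⦄ (f : X ⟶ Y) (g : Y ⟶ Z), W f → W (f ≫ g) → W g
  of_comp_right : ∀ ⦃X Y Z : C⦄ (f : X ⟶ Y) (g : Y ⟶ Z), W g → W (f ≫ g) → W f
  ws3 : ∀ ⦃X Y : C⦄ (p : Y ⟶ X) (s : X ⟶ Y), s ≫ p = 𝟙 X → W (p ≫ s) → W p

/-- The terminal category, as an object of `Cat`. -/
abbrev Cat.pt : Cat.{u, u} := Cat.of (Discrete PUnit.{u + 1})

/-- A basic localizer (Grothendieck's « localisateur fondamental ») on `Cat`: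
(L1) weak saturation, (L2) categories with a terminal object are aspherical,
(L3) locality over a base via comma categories. -/
structure IsBasicLocalizer (W : MorphismProperty Cat.{u, u}) : Prop where
  weaklySaturated : IsWeaklySaturated W
  terminal : ∀ (I : Cat.{u, u}) [HasTerminal I],
    W (X := I) (Y := Cat.pt.{u}) (Functor.star I).toCatHom
  locality : ∀ ⦃I J K : Cat.{u, u}⦄ (w : I ⟶ J) (v : J ⟶ K),
    (∀ k : K,
      W (X := Cat.of (Comma (w.toFunctor ⋙ v.toFunctor) (Functor.fromPUnit.{u} k)))
        (Y := Cat.of (Comma v.toFunctor (Functor.fromPUnit.{u} k)))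
        (Comma.preLeft w.toFunctor v.toFunctor (Functor.fromPUnit.{u} k)).toCatHom) →
    W w

instance : Subsingleton (Discrete PUnit.{u+1}) := ⟨fun a b => by cases a; cases b; congr⟩
instance : Subsingleton ↑Cat.pt.{u} := inferInstanceAs (Subsingleton (Discrete PUnit.{u+1}))
instance (X Y : ↑Cat.pt.{u}) : Subsingleton (X ⟶ Y) :=
  inferInstanceAs (Subsingleton (ULift (PLift _)))

/-- A terminal object in `Comma F (fromPUnit k)` from a "relative terminal" object. -/
noncomputable def commaTerminal {C : Type u} [Category.{u} C] {D : Type u} [Category.{u} D]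
    (F : C ⥤ D) (k : D) (c : C) (e : F.obj c ⟶ k)
    (H : ∀ (c' : C) (h : F.obj c' ⟶ k), ∃! u : c' ⟶ c, F.map u ≫ e = h) :
    IsTerminal ({ left := c, right := ⟨⟨⟩⟩, hom := e } : Comma F (Functor.fromPUnit.{u} k)) := by
  apply IsTerminal.ofUniqueHom (fun X => ?_) (fun X m => ?_)
  · exact { left := (H X.left X.hom).exists.choose
            right := eqToHom (by apply Subsingleton.elim)
            w := by simpa using (H X.left X.hom).exists.choose_spec }
  · ext
    · exact (H X.left X.hom).unique (by simpa using m.w) (H X.left X.hom).exists.choose_spec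
    · apply Subsingleton.elim

/-- Any two functors into the point category agree. -/
theorem toPt_eq {C : Cat.{u,u}} (F G : C ⟶ Cat.pt.{u}) : F = G :=
  Cat.ext (CategoryTheory.Functor.ext (F := F.toFunctor) (G := G.toFunctor)
    (fun _ => Subsingleton.elim _ _) (fun _ _ _ => Subsingleton.elim _ _))

/-- If all the comma categories of `w` over objects of `J` have terminal objects,
then `w` is in any basic localizer. -/
theorem aspherical {W : MorphismProperty Cat.{u, u}} (hW : IsBasicLocalizer W)
    {I J : Cat.{u, u}} (w : I ⟶ J)
    (h : ∀ j : ↥J, HasTerminal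
      (Comma (w.toFunctor ⋙ (𝟙 J : J ⟶ J).toFunctor) (Functor.fromPUnit.{u} j))) :
    W w := by
  apply hW.locality w (𝟙 J)
  intro j
  haveI := h j
  have hB0 : HasTerminal (Comma ((𝟙 J : J ⟶ J).toFunctor) (Functor.fromPUnit.{u} j)) := by
    refine IsTerminal.hasTerminal (commaTerminal _ j j (𝟙 j) (fun c' h => ?_))
    exact ⟨h, by simp, fun u hu => by simpa using hu⟩
  set A := Cat.of (Comma (w.toFunctor ⋙ (𝟙 J : J ⟶ J).toFunctor) (Functor.fromPUnit.{u} j))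
  set B := Cat.of (Comma ((𝟙 J : J ⟶ J).toFunctor) (Functor.fromPUnit.{u} j))
  haveI : HasTerminal ↑A := h j
  haveI : HasTerminal ↑B := hB0
  have hA : W (X := A) (Y := Cat.pt.{u}) (Functor.star A).toCatHom := hW.terminal A
  have hB : W (X := B) (Y := Cat.pt.{u}) (Functor.star B).toCatHom := hW.terminal B
  have key : ((Comma.preLeft w.toFunctor (𝟙 J : J ⟶ J).toFunctor (Functor.fromPUnit.{u} j)).toCatHom
      : A ⟶ B) ≫ ((Functor.star B).toCatHom : B ⟶ Cat.pt.{u}) = ((Functor.star A).toCatHom : A ⟶ Cat.pt.{u}) :=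
    toPt_eq _ _
  exact hW.weaklySaturated.of_comp_right _ _ hB (key ▸ hA)

/-- The cylinder `[1] × I` on a small category. -/
abbrev Cyl (I : Cat.{u,u}) : Cat.{u,u} := Cat.of (ULift.{u} (Fin 2) × ↥I)

/-- The projection `ULift (Fin 2) ⥤ Fin 2`. -/
def dn : ULift.{u} (Fin 2) ⥤ Fin 2 :=
  (show Monotone (ULift.down : ULift.{u} (Fin 2) → Fin 2) from fun _ _ h => h).functor

/-- The homotopy `[1] × I ⥤ J` associated to a natural transformation. -/
def cylH {I J : Cat.{u,u}} (f g : I ⟶ J) (μ : f.toFunctor ⟶ g.toFunctor) : Cyl I ⟶ J :=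
  (Functor.uncurry.obj (dn ⋙ (ComposableArrows.mk₁ μ)) : ULift.{u} (Fin 2) × ↥I ⥤ ↥J).toCatHom

/-- The projection from the cylinder. -/
def cylP (I : Cat.{u,u}) : Cyl I ⟶ I :=
  (CategoryTheory.Prod.snd _ _ : ULift.{u} (Fin 2) × ↥I ⥤ ↥I).toCatHom

/-- The two inclusions into the cylinder. -/
def cylI (I : Cat.{u,u}) (t : Fin 2) : I ⟶ Cyl I :=
  (Functor.prod' ((Functor.const ↥I).obj ⟨t⟩) (𝟭 ↥I) : ↥I ⥤ ULift.{u} (Fin 2) × ↥I).toCatHom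

theorem cylP_mem {W : MorphismProperty Cat.{u, u}} (hW : IsBasicLocalizer W) (I : Cat.{u,u}) :
    W (cylP I) := by
  apply aspherical hW
  intro i
  refine IsTerminal.hasTerminal (commaTerminal _ i (⟨1⟩, i) (𝟙 i) (fun c' h => ?_))
  refine ⟨(homOfLE (Fin.le_last c'.1.down : c'.1 ≤ ⟨1⟩), h), Category.comp_id _, fun u hu => ?_⟩
  have h2 : u.2 = h := (Category.comp_id u.2).symm.trans hu
  exact Prod.ext (Subsingleton.elim _ _) h2

theorem cylH_comp {I J : Cat.{u,u}} (f g : I ⟶ J) (μ : f.toFunctor ⟶ g.toFunctor) :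
    cylI I 0 ≫ cylH f g μ = f ∧ cylI I 1 ≫ cylH f g μ = g := by
  constructor <;>
  · refine Cat.ext (CategoryTheory.Functor.ext (fun X => rfl) (fun X Y u => ?_))
    change ((dn ⋙ ComposableArrows.mk₁ μ).map (𝟙 _)).app X ≫ ((dn ⋙ ComposableArrows.mk₁ μ).obj _).map u = _
    rw [CategoryTheory.Functor.map_id]
    simp [dn, Monotone.functor]
    exact ((Category.id_comp _).trans (Category.comp_id _)).symm

/-- Functors connected by a natural transformation are simultaneously in any basic
localizer: if `μ : f ⟹ g` exists, then `f ∈ W ↔ g ∈ W`. -/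
theorem IsBasicLocalizer.mem_iff_of_natTrans {W : MorphismProperty Cat.{u, u}}
    (hW : IsBasicLocalizer W) {I J : Cat.{u, u}} (f g : I ⟶ J)
    (μ : f.toFunctor ⟶ g.toFunctor) : W f ↔ W g := by
  obtain ⟨h0, h1⟩ := cylH_comp f g μ
  have hP := cylP_mem hW I
  have hi : ∀ t : Fin 2, W (cylI I t) := fun t =>
    hW.weaklySaturated.of_comp_right (cylI I t) (cylP I) hP (hW.weaklySaturated.id_mem I)
  constructor
  · intro hf
    have hH : W (cylH f g μ) :=
      hW.weaklySaturated.of_comp_left _ _ (hi 0) (h0.symm ▸ hf)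
    exact h1 ▸ hW.weaklySaturated.comp_mem _ _ (hi 1) hH
  · intro hg
    have hH : W (cylH f g μ) :=
      hW.weaklySaturated.of_comp_left _ _ (hi 1) (h1.symm ▸ hg)
    exact h0 ▸ hW.weaklySaturated.comp_mem _ _ (hi 0) hH
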